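/- Let (B, L, θ) be a Boolean dynamical system and suppose that either B = {∅}, or B ∖ {∅} is the only maximal tail of (B, L, θ). Then S(H(A)) = B for every nonempty A ∈ B. -/

import Mathlib

namespace BoolDyn

variable {X L : Type*}

section Defs

variable [GeneralizedBooleanAlgebra X]

/-- A map `X → X` is an action on the generalized Boolean algebra `X` if it preserves
`⊥`, `⊔`, `⊓` and `\`. -/
def IsBoolAction (f : X → X) : Prop :=
  f ⊥ = ⊥ ∧ (∀ a b : X, f (a ⊔ b) = f a ⊔ f b) ∧ (∀ a b : X, f (a ⊓ b) = f a ⊓ f b) ∧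
    ∀ a b : X, f (a \ b) = f a \ f b

/-- `θ_β := θ_{β_n} ∘ ⋯ ∘ θ_{β_1}` for a word `β = β_1 ⋯ β_n ∈ L^*`, with `θ_∅ = id`. -/
def thetaWord (θ : L → X → X) (β : List L) (a : X) : X :=
  β.foldl (fun x α => θ α x) a

/-- `Δ_a := {α ∈ L : θ_α(a) ≠ ∅}`. -/
def Delta (θ : L → X → X) (a : X) : Set L := {α : L | θ α a ≠ ⊥}

/-- `a` is regular if `0 < |Δ_b| < ∞` for every nonempty `b ⊆ a`. -/
def IsRegularElem (θ : L → X → X) (a : X) : Prop :=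
  ∀ b : X, b ≤ a → b ≠ ⊥ → (Delta θ b).Finite ∧ (Delta θ b).Nonempty

/-- `B_reg`, the set of regular elements. -/
def regSet (θ : L → X → X) : Set X := {a : X | IsRegularElem θ a}

/-- An ideal of a generalized Boolean algebra: a nonempty subset closed under `⊔` and
downward closed under `≤`. -/
structure IsIdeal (I : Set X) : Prop where
  nonempty : I.Nonempty
  sup_mem : ∀ ⦃a b : X⦄, a ∈ I → b ∈ I → a ⊔ b ∈ I
  lower : ∀ ⦃a b : X⦄, a ∈ I → b ≤ a → b ∈ I

/-- A hereditary subset: closed under all the actions. -/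
def Hereditary (θ : L → X → X) (H : Set X) : Prop := ∀ a ∈ H, ∀ α : L, θ α a ∈ H

/-- Saturated: `a ∈ H` whenever `a` is regular and `θ_α(a) ∈ H` for every `α ∈ Δ_a`. -/
def Saturated (θ : L → X → X) (H : Set X) : Prop :=
  ∀ a : X, IsRegularElem θ a → (∀ α ∈ Delta θ a, θ α a ∈ H) → a ∈ H

/-- `J`-saturated: `a ∈ H` whenever `a ∈ J` and `θ_α(a) ∈ H` for every `α ∈ Δ_a`. -/
def JSaturated (θ : L → X → X) (J H : Set X) : Prop :=
  ∀ a ∈ J, (∀ α ∈ Delta θ a, θ α a ∈ H) → a ∈ H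

/-- A cycle: `β` nonempty, `a ≠ ∅`, and `θ_β(b) = b` for every `b ⊆ a`. -/
def IsCycle (θ : L → X → X) (β : List L) (a : X) : Prop :=
  β ≠ [] ∧ a ≠ ⊥ ∧ ∀ b : X, b ≤ a → thetaWord θ β b = b

/-- `(β, a)` has no exits: for every `t ∈ {1,…,n}` and every nonempty `b ⊆ θ_{β_{1,t}}(a)`,
`b` is regular and `Δ_b = {β_{t+1}}` (with `β_{n+1} := β_1`). -/
def NoExits (θ : L → X → X) (β : List L) (a : X) : Prop :=
  ∀ t : ℕ, 1 ≤ t → t ≤ β.length →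
    ∀ b : X, b ≤ thetaWord θ (β.take t) a → b ≠ ⊥ →
      IsRegularElem θ b ∧ Delta θ b = {α : L | β[t % β.length]? = some α}

/-- Condition (L): there is no cycle with no exits. -/
def CondL (θ : L → X → X) : Prop :=
  ¬ ∃ (β : List L) (a : X), IsCycle θ β a ∧ NoExits θ β a

/-- A filter of a generalized Boolean algebra. -/
structure IsBoolFilter (F : Set X) : Prop where
  nonempty : F.Nonempty
  bot_not_mem : ⊥ ∉ F
  inf_mem : ∀ ⦃a b : X⦄, a ∈ F → b ∈ F → a ⊓ b ∈ F
  upper : ∀ ⦃a b : X⦄, a ∈ F → a ≤ b → b ∈ F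

/-- An ultrafilter: a maximal filter. -/
def IsUltra (F : Set X) : Prop :=
  IsBoolFilter F ∧ ∀ G : Set X, IsBoolFilter G → F ⊆ G → G = F

/-- A filter of the ideal `I`, viewed as a generalized Boolean algebra in its own right. -/
structure IsFilterOn (I F : Set X) : Prop where
  subset : F ⊆ I
  nonempty : F.Nonempty
  bot_not_mem : ⊥ ∉ F
  inf_mem : ∀ ⦃a b : X⦄, a ∈ F → b ∈ F → a ⊓ b ∈ F
  upper : ∀ a b : X, a ∈ F → b ∈ I → a ≤ b → b ∈ F

/-- An ultrafilter of the ideal `I`: a maximal filter of `I`. -/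
def IsUltraOn (I F : Set X) : Prop :=
  IsFilterOn I F ∧ ∀ G : Set X, IsFilterOn I G → F ⊆ G → G = F

/-- `R_α := {a ∈ B : a ≤ θ_α(c) for some c ∈ B}`. -/
def Rset (θ : L → X → X) (α : L) : Set X := {a : X | ∃ c : X, a ≤ θ α c}

/-- `β^k`, the `k`-fold concatenation of the word `β`. -/
def wordPow (β : List L) : ℕ → List L
  | 0 => []
  | k + 1 => β ++ wordPow β k

/-- An ultrafilter cycle. -/
def UltrafilterCycle (θ : L → X → X) (β : List L) (η : Set X) : Prop :=
  β ≠ [] ∧ IsUltra η ∧ ∀ a ∈ η, thetaWord θ β a ∈ η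

/-- A maximal tail. -/
structure MaximalTail (θ : L → X → X) (T : Set X) : Prop where
  nonempty : T.Nonempty
  not_bot_mem : ⊥ ∉ T
  t2 : ∀ (a : X) (α : L), θ α a ∈ T → a ∈ T
  t3 : ∀ a b : X, a ⊔ b ∈ T → a ∈ T ∨ b ∈ T
  t4 : ∀ a b : X, a ∈ T → a ≤ b → b ∈ T
  t5 : ∀ a : X, a ∈ T → IsRegularElem θ a → ∃ α : L, θ α a ∈ T
  t6 : ∀ a b : X, a ∈ T → b ∈ T →
    ∃ β γ : List L, thetaWord θ β a ⊓ thetaWord θ γ b ∈ T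

/-- A cyclic (maximal) tail. -/
def CyclicTail (θ : L → X → X) (T : Set X) : Prop :=
  ∃ (β : List L) (η : Set X), UltrafilterCycle θ β η ∧
    T = {b : X | ∃ γ : List L, thetaWord θ γ b ∈ η} ∧
    ∃ A ∈ η, ∀ γ : List L, γ ≠ [] → ∀ b : X, b ≤ A → thetaWord θ γ b ∈ η →
      b ∈ η ∧ ∃ k : ℕ, 0 < k ∧ γ = wordPow β k

/-- Condition (K). -/
def CondK (θ : L → X → X) : Prop :=
  ¬ ∃ (β : List L) (η : Set X) (A : X), UltrafilterCycle θ β η ∧ A ∈ η ∧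
    ∀ γ : List L, γ ≠ [] → ∀ b : X, b ≤ A → thetaWord θ γ b ∈ η →
      b ∈ η ∧ ∃ k : ℕ, 0 < k ∧ γ = wordPow β k

/-- `H(A) = {b : b ≤ ⋃_{β ∈ F} θ_β(A) for some finite F ⊆ L^*}`. -/
def HA (θ : L → X → X) (A : X) : Set X :=
  {b : X | ∃ F : Finset (List L), b ≤ F.sup fun β => thetaWord θ β A}

/-- `I₁ ⊕ I₂`, the smallest ideal containing the ideals `I₁` and `I₂`. -/
def oplus (I₁ I₂ : Set X) : Set X := {c : X | ∃ a ∈ I₁, ∃ b ∈ I₂, c = a ⊔ b}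

/-- `S(H(A))`. -/
def SHA (θ : L → X → X) (A : X) : Set X :=
  {b : X | ∃ n : ℕ, (∀ β : List L, β.length = n → thetaWord θ β b ∈ HA θ A) ∧
    ∀ γ : List L, γ.length < n → thetaWord θ γ b ∈ oplus (HA θ A) (regSet θ)}

/-- Minimality: `{∅}` and `B` are the only saturated hereditary ideals. -/
def Minimal (θ : L → X → X) : Prop :=
  ∀ H : Set X, IsIdeal H → Hereditary θ H → Saturated θ H → H = {⊥} ∨ H = Set.univ

end Defs

end BoolDyn

open BoolDyn


namespace Statement14Aux

open BoolDyn

variable {X L : Type*} [GeneralizedBooleanAlgebra X] {θ : L → X → X}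

section Basic

variable (hθ : ∀ α : L, IsBoolAction (θ α))

include hθ

lemma theta_bot (α : L) : θ α ⊥ = ⊥ := (hθ α).1

lemma theta_sup (α : L) (a b : X) : θ α (a ⊔ b) = θ α a ⊔ θ α b := (hθ α).2.1 a b

lemma theta_inf (α : L) (a b : X) : θ α (a ⊓ b) = θ α a ⊓ θ α b := (hθ α).2.2.1 a b

lemma theta_mono (α : L) {a b : X} (hab : a ≤ b) : θ α a ≤ θ α b := by
  calc θ α a ≤ θ α a ⊔ θ α b := le_sup_left
    _ = θ α (a ⊔ b) := (theta_sup hθ α a b).symm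
    _ = θ α b := by rw [sup_eq_right.2 hab]

omit hθ in
@[simp] lemma thetaWord_nil (a : X) : thetaWord θ [] a = a := rfl

omit hθ in
lemma thetaWord_cons (α : L) (β : List L) (a : X) :
    thetaWord θ (α :: β) a = thetaWord θ β (θ α a) := rfl

omit hθ in
lemma thetaWord_append (β γ : List L) (a : X) :
    thetaWord θ (β ++ γ) a = thetaWord θ γ (thetaWord θ β a) := by
  simp [thetaWord, List.foldl_append]

lemma thetaWord_bot (β : List L) : thetaWord θ β (⊥ : X) = ⊥ := by
  induction β with
  | nil => rfl
  | cons α β ih => rw [thetaWord_cons, theta_bot hθ, ih]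

lemma thetaWord_sup (β : List L) (a b : X) :
    thetaWord θ β (a ⊔ b) = thetaWord θ β a ⊔ thetaWord θ β b := by
  induction β generalizing a b with
  | nil => rfl
  | cons α β ih => rw [thetaWord_cons, theta_sup hθ, ih, thetaWord_cons, thetaWord_cons]

lemma thetaWord_mono (β : List L) {a b : X} (hab : a ≤ b) :
    thetaWord θ β a ≤ thetaWord θ β b := by
  induction β generalizing a b with
  | nil => simpa
  | cons α β ih => exact ih (theta_mono hθ α hab)

end Basic

section HAfacts

variable (hθ : ∀ α : L, IsBoolAction (θ α)) {A : X}

include hθ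

omit hθ in
lemma bot_mem_HA : (⊥ : X) ∈ HA θ A := ⟨∅, by simp⟩

omit hθ in
lemma self_mem_HA : A ∈ HA θ A := ⟨{[]}, by simp [HA]⟩

omit hθ in
lemma HA_lower {b c : X} (hb : b ∈ HA θ A) (hcb : c ≤ b) : c ∈ HA θ A := by
  obtain ⟨F, hF⟩ := hb; exact ⟨F, hcb.trans hF⟩

omit hθ in
lemma HA_sup {b c : X} (hb : b ∈ HA θ A) (hc : c ∈ HA θ A) : b ⊔ c ∈ HA θ A := by
  classical
  obtain ⟨F, hF⟩ := hb; obtain ⟨G, hG⟩ := hc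
  exact ⟨F ∪ G, by rw [Finset.sup_union]; exact sup_le_sup hF hG⟩

lemma theta_finsetSup {ι : Type*} (α : L) (F : Finset ι) (g : ι → X) :
    θ α (F.sup g) = F.sup fun i => θ α (g i) := by
  classical
  induction F using Finset.induction with
  | empty => simpa using theta_bot hθ α
  | insert _ _ h ih => rw [Finset.sup_insert, Finset.sup_insert, theta_sup hθ, ih]

lemma HA_theta {b : X} (α : L) (hb : b ∈ HA θ A) : θ α b ∈ HA θ A := by
  classical
  obtain ⟨F, hF⟩ := hb
  refine ⟨F.image (· ++ [α]), ?_⟩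
  rw [Finset.sup_image]
  calc θ α b ≤ θ α (F.sup fun β => thetaWord θ β A) := theta_mono hθ α hF
    _ = F.sup fun β => θ α (thetaWord θ β A) := theta_finsetSup hθ α F _
    _ = F.sup ((fun β => thetaWord θ β A) ∘ (· ++ [α])) := by
        refine Finset.sup_congr rfl fun β _ => ?_
        simp [thetaWord_append, thetaWord_cons]

lemma HA_thetaWord {b : X} (γ : List L) (hb : b ∈ HA θ A) : thetaWord θ γ b ∈ HA θ A := by
  induction γ generalizing b with
  | nil => simpa
  | cons α γ ih => exact ih (HA_theta hθ α hb)

end HAfacts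

section Regfacts

variable (hθ : ∀ α : L, IsBoolAction (θ α))

include hθ

omit hθ in
lemma bot_reg : IsRegularElem θ (⊥ : X) := by
  intro b hb hbne; exact absurd (le_bot_iff.1 hb) hbne

omit hθ in
lemma reg_lower {a b : X} (ha : IsRegularElem θ a) (hba : b ≤ a) : IsRegularElem θ b :=
  fun c hc hcne => ha c (hc.trans hba) hcne

lemma Delta_bot : Delta θ (⊥ : X) = ∅ := by
  ext α; simp [Delta, theta_bot hθ]

lemma Delta_mono {a b : X} (hab : a ≤ b) : Delta θ a ⊆ Delta θ b := by
  intro α hα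
  simp only [Delta, Set.mem_setOf_eq] at hα ⊢
  intro hbot
  exact hα (le_bot_iff.1 (hbot ▸ theta_mono hθ α hab))

lemma reg_sup {a b : X} (ha : IsRegularElem θ a) (hb : IsRegularElem θ b) :
    IsRegularElem θ (a ⊔ b) := by
  intro c hc hcne
  set c₁ := c ⊓ a with hc₁
  set c₂ := c \ a with hc₂
  have hsplit : c₁ ⊔ c₂ = c := sup_inf_sdiff c a
  have h1 : c₁ ≤ a := inf_le_right
  have h2 : c₂ ≤ b := sdiff_le_iff.2 hc
  have hDelta : Delta θ c = Delta θ c₁ ∪ Delta θ c₂ := by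
    ext α
    simp only [Delta, Set.mem_setOf_eq, Set.mem_union]
    constructor
    · intro h
      by_contra hcon
      push_neg at hcon
      apply h
      rw [← hsplit, theta_sup hθ, hcon.1, hcon.2, sup_idem]
    · have hc₁le : c₁ ≤ c := by rw [← hsplit]; exact le_sup_left
      have hc₂le : c₂ ≤ c := by rw [← hsplit]; exact le_sup_right
      rintro (h | h) hbot
      · exact h (le_bot_iff.1 (hbot ▸ theta_mono hθ α hc₁le))
      · exact h (le_bot_iff.1 (hbot ▸ theta_mono hθ α hc₂le))
  have hfin : (Delta θ c).Finite := by
    rw [hDelta]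
    refine Set.Finite.union ?_ ?_
    · rcases eq_or_ne c₁ ⊥ with h | h
      · rw [h, Delta_bot hθ]; exact Set.finite_empty
      · exact (ha c₁ h1 h).1
    · rcases eq_or_ne c₂ ⊥ with h | h
      · rw [h, Delta_bot hθ]; exact Set.finite_empty
      · exact (hb c₂ h2 h).1
  refine ⟨hfin, ?_⟩
  have : c₁ ≠ ⊥ ∨ c₂ ≠ ⊥ := by
    by_contra hcon
    push_neg at hcon
    exact hcne (by rw [← hsplit, hcon.1, hcon.2, sup_idem])
  rcases this with h | h
  · obtain ⟨α, hα⟩ := (ha c₁ h1 h).2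
    exact ⟨α, hDelta ▸ Set.mem_union_left _ hα⟩
  · obtain ⟨α, hα⟩ := (hb c₂ h2 h).2
    exact ⟨α, hDelta ▸ Set.mem_union_right _ hα⟩

end Regfacts

section Oplusfacts

variable (hθ : ∀ α : L, IsBoolAction (θ α)) {A : X}

include hθ

omit hθ in
lemma mem_oplus_of_HA {b : X} (hb : b ∈ HA θ A) : b ∈ oplus (HA θ A) (regSet θ) :=
  ⟨b, hb, ⊥, bot_reg, (sup_bot_eq b).symm⟩

omit hθ in
lemma mem_oplus_of_reg {b : X} (hb : IsRegularElem θ b) : b ∈ oplus (HA θ A) (regSet θ) :=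
  ⟨⊥, bot_mem_HA, b, hb, (bot_sup_eq b).symm⟩

lemma oplus_sup {b c : X} (hb : b ∈ oplus (HA θ A) (regSet θ))
    (hc : c ∈ oplus (HA θ A) (regSet θ)) : b ⊔ c ∈ oplus (HA θ A) (regSet θ) := by
  obtain ⟨b₁, hb₁, b₂, hb₂, rfl⟩ := hb
  obtain ⟨c₁, hc₁, c₂, hc₂, rfl⟩ := hc
  exact ⟨b₁ ⊔ c₁, HA_sup hb₁ hc₁, b₂ ⊔ c₂, reg_sup hθ hb₂ hc₂, by
    rw [sup_sup_sup_comm]⟩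

omit hθ in
lemma oplus_lower {b c : X} (hb : b ∈ oplus (HA θ A) (regSet θ)) (hcb : c ≤ b) :
    c ∈ oplus (HA θ A) (regSet θ) := by
  obtain ⟨b₁, hb₁, b₂, hb₂, rfl⟩ := hb
  refine ⟨c ⊓ b₁, HA_lower hb₁ inf_le_right, c \ b₁, reg_lower hb₂ (sdiff_le_iff.2 hcb), ?_⟩
  exact (sup_inf_sdiff c b₁).symm

end Oplusfacts

section SHAfacts

variable (hθ : ∀ α : L, IsBoolAction (θ α)) {A : X}

include hθ

/-- Strong form of membership in `S(H(A))`. -/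
lemma SHA_strong {b : X} (hb : b ∈ SHA θ A) :
    ∃ n : ℕ, (∀ β : List L, n ≤ β.length → thetaWord θ β b ∈ HA θ A) ∧
      ∀ γ : List L, thetaWord θ γ b ∈ oplus (HA θ A) (regSet θ) := by
  obtain ⟨n, h1, h2⟩ := hb
  have key : ∀ β : List L, n ≤ β.length → thetaWord θ β b ∈ HA θ A := by
    intro β hβ
    have hsplit : β = β.take n ++ β.drop n := (List.take_append_drop n β).symm
    have hlen : (β.take n).length = n := by
      rw [List.length_take]; omega
    rw [hsplit, thetaWord_append]
    exact HA_thetaWord hθ _ (h1 _ hlen)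
  refine ⟨n, key, fun γ => ?_⟩
  rcases lt_or_ge γ.length n with h | h
  · exact h2 γ h
  · exact mem_oplus_of_HA (key γ h)

lemma mem_SHA_of {b : X} (n : ℕ)
    (h1 : ∀ β : List L, n ≤ β.length → thetaWord θ β b ∈ HA θ A)
    (h2 : ∀ γ : List L, thetaWord θ γ b ∈ oplus (HA θ A) (regSet θ)) : b ∈ SHA θ A :=
  ⟨n, fun β hβ => h1 β hβ.ge, fun γ _ => h2 γ⟩

lemma bot_mem_SHA : (⊥ : X) ∈ SHA θ A :=
  ⟨0, fun β _ => by rw [thetaWord_bot hθ]; exact bot_mem_HA, fun γ hγ => by omega⟩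

lemma self_mem_SHA : A ∈ SHA θ A :=
  ⟨0, fun β hβ => by rw [List.length_eq_zero_iff.1 hβ]; exact self_mem_HA, fun γ hγ => by omega⟩

lemma SHA_lower {b c : X} (hb : b ∈ SHA θ A) (hcb : c ≤ b) : c ∈ SHA θ A := by
  obtain ⟨n, h1, h2⟩ := SHA_strong hθ hb
  exact mem_SHA_of hθ n
    (fun β hβ => HA_lower (h1 β hβ) (thetaWord_mono hθ β hcb))
    (fun γ => oplus_lower (h2 γ) (thetaWord_mono hθ γ hcb))

lemma SHA_sup {b c : X} (hb : b ∈ SHA θ A) (hc : c ∈ SHA θ A) : b ⊔ c ∈ SHA θ A := by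
  obtain ⟨n, h1, h2⟩ := SHA_strong hθ hb
  obtain ⟨m, g1, g2⟩ := SHA_strong hθ hc
  refine mem_SHA_of hθ (max n m) (fun β hβ => ?_) (fun γ => ?_)
  · rw [thetaWord_sup hθ]
    exact HA_sup (h1 β (le_trans (le_max_left n m) hβ)) (g1 β (le_trans (le_max_right n m) hβ))
  · rw [thetaWord_sup hθ]
    exact oplus_sup hθ (h2 γ) (g2 γ)

lemma SHA_theta {b : X} (α : L) (hb : b ∈ SHA θ A) : θ α b ∈ SHA θ A := by
  obtain ⟨n, h1, h2⟩ := SHA_strong hθ hb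
  refine mem_SHA_of hθ n (fun β hβ => ?_) (fun γ => ?_)
  · rw [← thetaWord_cons]
    exact h1 (α :: β) (by simp; omega)
  · rw [← thetaWord_cons]
    exact h2 (α :: γ)

lemma SHA_thetaWord {b : X} (γ : List L) (hb : b ∈ SHA θ A) : thetaWord θ γ b ∈ SHA θ A := by
  induction γ generalizing b with
  | nil => simpa
  | cons α γ ih => exact ih (SHA_theta hθ α hb)

lemma SHA_saturated : Saturated θ (SHA θ A) := by
  classical
  intro b hreg hΔ
  rcases eq_or_ne b ⊥ with rfl | hbne
  · exact bot_mem_SHA hθ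
  obtain ⟨hfin, -⟩ := hreg b le_rfl hbne
  -- for each α, θ α b ∈ SHA θ A
  have hall : ∀ α : L, θ α b ∈ SHA θ A := by
    intro α
    by_cases hα : α ∈ Delta θ b
    · exact hΔ α hα
    · have : θ α b = ⊥ := by
        by_contra h; exact hα h
      rw [this]; exact bot_mem_SHA hθ
  -- choose witnesses
  have hchoice : ∀ α : L, ∃ n : ℕ, (∀ β : List L, n ≤ β.length → thetaWord θ β (θ α b) ∈ HA θ A) ∧
      ∀ γ : List L, thetaWord θ γ (θ α b) ∈ oplus (HA θ A) (regSet θ) :=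
    fun α => SHA_strong hθ (hall α)
  choose N hN1 hN2 using hchoice
  set S : Finset L := hfin.toFinset with hS
  refine mem_SHA_of hθ (S.sup N + 1) (fun β hβ => ?_) (fun γ => ?_)
  · rcases β with _ | ⟨α, β'⟩
    · simp at hβ
    · rw [thetaWord_cons]
      by_cases hα : α ∈ Delta θ b
      · refine hN1 α β' ?_
        have hle : N α ≤ S.sup N := Finset.le_sup (by simpa [hS] using hα)
        simp only [List.length_cons] at hβ
        omega
      · have : θ α b = ⊥ := by by_contra h; exact hα h
        rw [this, thetaWord_bot hθ]; exact bot_mem_HA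
  · rcases γ with _ | ⟨α, γ'⟩
    · exact mem_oplus_of_reg hreg
    · rw [thetaWord_cons]
      exact hN2 α γ'

end SHAfacts

/-! ### Filters avoiding an ideal -/

/-- A filter of `X` avoiding the set `I`. -/
def Good (I F : Set X) : Prop :=
  F.Nonempty ∧ (∀ a ∈ F, ∀ b ∈ F, a ⊓ b ∈ F) ∧ (∀ a ∈ F, ∀ b : X, a ≤ b → b ∈ F) ∧
    ∀ a ∈ F, a ∉ I

section Filters

variable (hθ : ∀ α : L, IsBoolAction (θ α))
variable {I : Set X}

include hθ

omit hθ in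
lemma exists_maximal_good
    (hlow : ∀ a ∈ I, ∀ b : X, b ≤ a → b ∈ I)
    (hsup : ∀ a ∈ I, ∀ b ∈ I, a ⊔ b ∈ I)
    {G : Set X} (hG : Good I G) :
    ∃ M : Set X, Good I M ∧ G ⊆ M ∧ ∀ a c : X, a ⊔ c ∈ M → a ∈ M ∨ c ∈ M := by
  obtain ⟨M, hMmem, hMgood, hMub⟩ := zorn_subset_nonempty {F : Set X | Good I F}
    (fun c hc hchain hcne => by
      refine ⟨⋃₀ c, ⟨?_, ?_, ?_, ?_⟩, fun s hs => Set.subset_sUnion_of_mem hs⟩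
      · obtain ⟨F, hF⟩ := hcne
        obtain ⟨x, hx⟩ := (hc hF).1
        exact ⟨x, F, hF, hx⟩
      · rintro a ⟨F₁, hF₁, ha⟩ b ⟨F₂, hF₂, hb⟩
        rcases hchain.total hF₁ hF₂ with h | h
        · exact ⟨F₂, hF₂, (hc hF₂).2.1 a (h ha) b hb⟩
        · exact ⟨F₁, hF₁, (hc hF₁).2.1 a ha b (h hb)⟩
      · rintro a ⟨F₁, hF₁, ha⟩ b hab
        exact ⟨F₁, hF₁, (hc hF₁).2.2.1 a ha b hab⟩
      · rintro a ⟨F₁, hF₁, ha⟩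
        exact (hc hF₁).2.2.2 a ha) G hG
  refine ⟨M, hMgood, hMmem, ?_⟩
  intro a c hac
  by_contra hcon
  push_neg at hcon
  obtain ⟨ha, hc⟩ := hcon
  have key : ∀ x : X, x ∉ M → ∃ f ∈ M, f ⊓ x ∈ I := by
    intro x hx
    by_contra hno
    push_neg at hno
    set Gx : Set X := {d | ∃ f ∈ M, f ⊓ x ≤ d} with hGx
    have hGxGood : Good I Gx := by
      obtain ⟨f₀, hf₀⟩ := hMgood.1
      refine ⟨⟨f₀ ⊓ x, f₀, hf₀, le_rfl⟩, ?_, ?_, ?_⟩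
      · rintro d₁ ⟨f₁, hf₁, h₁⟩ d₂ ⟨f₂, hf₂, h₂⟩
        refine ⟨f₁ ⊓ f₂, hMgood.2.1 f₁ hf₁ f₂ hf₂, le_inf ?_ ?_⟩
        · exact le_trans (inf_le_inf_right x (inf_le_left)) h₁
        · exact le_trans (inf_le_inf_right x (inf_le_right)) h₂
      · rintro d ⟨f, hf, hfd⟩ e hde
        exact ⟨f, hf, hfd.trans hde⟩
      · rintro d ⟨f, hf, hfd⟩ hdI
        exact hno f hf (hlow d hdI _ hfd)
    have hMGx : M ⊆ Gx := fun d hd => ⟨d, hd, inf_le_left⟩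
    have : Gx ⊆ M := hMub hGxGood hMGx
    obtain ⟨f₀, hf₀⟩ := hMgood.1
    exact hx (this ⟨f₀, hf₀, inf_le_right⟩)
  obtain ⟨f₁, hf₁, hf₁I⟩ := key a ha
  obtain ⟨f₂, hf₂, hf₂I⟩ := key c hc
  have hfM : f₁ ⊓ f₂ ⊓ (a ⊔ c) ∈ M :=
    hMgood.2.1 _ (hMgood.2.1 f₁ hf₁ f₂ hf₂) _ hac
  have hle : f₁ ⊓ f₂ ⊓ (a ⊔ c) ≤ (f₁ ⊓ a) ⊔ (f₂ ⊓ c) := by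
    rw [inf_sup_left]
    refine sup_le_sup ?_ ?_
    · exact inf_le_inf_right a (inf_le_left)
    · exact inf_le_inf_right c (inf_le_right)
  exact hMgood.2.2.2 _ hfM (hlow _ (hsup _ hf₁I _ hf₂I) _ hle)

/-- The one-step extension of a prime filter avoiding a hereditary saturated ideal. -/
lemma step_lemma
    (hlow : ∀ a ∈ I, ∀ b : X, b ≤ a → b ∈ I)
    (hsup : ∀ a ∈ I, ∀ b ∈ I, a ⊔ b ∈ I)
    (hbot : (⊥ : X) ∈ I)
    (hsat : Saturated θ I)
    {F : Set X} (hF : Good I F) :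
    ∃ F' : Set X, (Good I F' ∧ ∀ a c : X, a ⊔ c ∈ F' → a ∈ F' ∨ c ∈ F') ∧
      (∀ c ∈ F, ∃ δ : List L, thetaWord θ δ c ∈ F') ∧
      (∀ c ∈ F, IsRegularElem θ c → ∃ α : L, θ α c ∈ F') := by
  classical
  by_cases hregex : ∃ c ∈ F, IsRegularElem θ c
  · -- there is a letter moving all of F out of I
    have hα : ∃ α : L, ∀ c ∈ F, θ α c ∉ I := by
      by_contra hno
      push_neg at hno
      obtain ⟨cs, hcsF, hcsreg⟩ := hregex
      have hcsne : cs ≠ ⊥ := fun h => hF.2.2.2 cs hcsF (h ▸ hbot)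
      obtain ⟨hfin, hne⟩ := hcsreg cs le_rfl hcsne
      choose cf hcfF hcfI using hno
      set S : Finset L := hfin.toFinset with hS
      have hSne : S.Nonempty := by
        obtain ⟨α, hα⟩ := hne
        exact ⟨α, by simpa [hS] using hα⟩
      set e : X := S.inf' hSne cf with he
      have heF : e ∈ F :=
        Finset.inf'_mem F (fun x hx y hy => hF.2.1 x hx y hy) S hSne cf (fun i _ => hcfF i)
      set d : X := cs ⊓ e with hd
      have hdF : d ∈ F := hF.2.1 cs hcsF e heF
      have hdreg : IsRegularElem θ d := reg_lower hcsreg inf_le_left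
      have hdI : d ∈ I := by
        refine hsat d hdreg ?_
        intro α hαd
        have hαcs : α ∈ Delta θ cs := Delta_mono hθ (inf_le_left : d ≤ cs) hαd
        have hde : d ≤ cf α := le_trans inf_le_right (Finset.inf'_le cf (by simpa [hS] using hαcs))
        exact hlow _ (hcfI α) _ (theta_mono hθ α hde)
      exact hF.2.2.2 d hdF hdI
    obtain ⟨α, hα⟩ := hα
    set G : Set X := {d | ∃ c ∈ F, θ α c ≤ d} with hG
    have hGgood : Good I G := by
      obtain ⟨c₀, hc₀⟩ := hF.1
      refine ⟨⟨θ α c₀, c₀, hc₀, le_rfl⟩, ?_, ?_, ?_⟩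
      · rintro d₁ ⟨c₁, hc₁, h₁⟩ d₂ ⟨c₂, hc₂, h₂⟩
        refine ⟨c₁ ⊓ c₂, hF.2.1 c₁ hc₁ c₂ hc₂, ?_⟩
        exact le_inf (le_trans (theta_mono hθ α inf_le_left) h₁)
          (le_trans (theta_mono hθ α inf_le_right) h₂)
      · rintro d ⟨c, hc, hcd⟩ e hde
        exact ⟨c, hc, hcd.trans hde⟩
      · rintro d ⟨c, hc, hcd⟩ hdI
        exact hα c hc (hlow d hdI _ hcd)
    obtain ⟨M, hMgood, hGM, hMprime⟩ := exists_maximal_good hlow hsup hGgood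
    refine ⟨M, ⟨hMgood, hMprime⟩, ?_, ?_⟩
    · intro c hc
      exact ⟨[α], hGM ⟨c, hc, le_rfl⟩⟩
    · intro c hc _
      exact ⟨α, hGM ⟨c, hc, le_rfl⟩⟩
  · push_neg at hregex
    obtain ⟨M, hMgood, hFM, hMprime⟩ := exists_maximal_good hlow hsup hF
    refine ⟨M, ⟨hMgood, hMprime⟩, fun c hc => ⟨[], hFM hc⟩, fun c hc hreg => ?_⟩
    exact absurd hreg (hregex c hc)

/-- The key construction: from an element outside a hereditary saturated ideal one builds a
maximal tail disjoint from the ideal. -/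
lemma exists_maximalTail
    (hlow : ∀ a ∈ I, ∀ b : X, b ≤ a → b ∈ I)
    (hsup : ∀ a ∈ I, ∀ b ∈ I, a ⊔ b ∈ I)
    (hbot : (⊥ : X) ∈ I)
    (hher : ∀ a ∈ I, ∀ γ : List L, thetaWord θ γ a ∈ I)
    (hsat : Saturated θ I)
    {b : X} (hb : b ∉ I) :
    ∃ T : Set X, MaximalTail θ T ∧ ∀ a ∈ T, a ∉ I := by
  classical
  -- initial filter
  have hF0 : Good I {d : X | b ≤ d} := by
    refine ⟨⟨b, le_rfl⟩, ?_, ?_, ?_⟩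
    · intro x hx y hy; exact le_inf hx hy
    · intro x hx y hxy; exact hx.trans hxy
    · intro x hx hxI; exact hb (hlow x hxI b hx)
  obtain ⟨M₀, hM₀good, hM₀mem, hM₀prime⟩ := exists_maximal_good hlow hsup hF0
  -- the type of prime good filters
  let Q := {F : Set X // Good I F ∧ ∀ a c : X, a ⊔ c ∈ F → a ∈ F ∨ c ∈ F}
  have hstepQ : ∀ q : Q, ∃ q' : Q,
      (∀ c ∈ q.1, ∃ δ : List L, thetaWord θ δ c ∈ q'.1) ∧
      (∀ c ∈ q.1, IsRegularElem θ c → ∃ α : L, θ α c ∈ q'.1) := by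
    rintro ⟨F, hFgood, hFprime⟩
    obtain ⟨F', hF'good, htrans, hregtrans⟩ := step_lemma hθ hlow hsup hbot hsat hFgood
    exact ⟨⟨F', hF'good⟩, htrans, hregtrans⟩
  choose stepf hstep1 hstep2 using hstepQ
  set q0 : Q := ⟨M₀, hM₀good, hM₀prime⟩ with hq0
  set seq : ℕ → Q := fun n => stepf^[n] q0 with hseq
  have hseq_succ : ∀ n : ℕ, seq (n + 1) = stepf (seq n) := by
    intro n
    simp only [hseq, Function.iterate_succ_apply']
  have hchain : ∀ n m : ℕ, n ≤ m → ∀ c ∈ (seq n).1, ∃ δ : List L, thetaWord θ δ c ∈ (seq m).1 := by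
    intro n m hnm
    induction m, hnm using Nat.le_induction with
    | base => exact fun c hc => ⟨[], hc⟩
    | succ m hnm ih =>
      intro c hc
      obtain ⟨δ, hδ⟩ := ih c hc
      obtain ⟨δ', hδ'⟩ := hstep1 (seq m) _ hδ
      rw [hseq_succ]
      exact ⟨δ ++ δ', by rwa [thetaWord_append]⟩
  set T : Set X := {a | ∃ (n : ℕ) (γ : List L), thetaWord θ γ a ∈ (seq n).1} with hT
  have hTdisj : ∀ a ∈ T, a ∉ I := by
    rintro a ⟨n, γ, hγ⟩ haI
    exact (seq n).2.1.2.2.2 _ hγ (hher a haI γ)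
  refine ⟨T, ?_, hTdisj⟩
  refine ⟨?_, ?_, ?_, ?_, ?_, ?_, ?_⟩
  · -- nonempty
    obtain ⟨x, hx⟩ := (seq 0).2.1.1
    exact ⟨x, 0, [], hx⟩
  · -- ⊥ ∉ T
    rintro ⟨n, γ, hγ⟩
    rw [thetaWord_bot hθ] at hγ
    exact (seq n).2.1.2.2.2 _ hγ hbot
  · -- t2
    rintro a α ⟨n, γ, hγ⟩
    exact ⟨n, α :: γ, hγ⟩
  · -- t3
    rintro a c ⟨n, γ, hγ⟩
    rw [thetaWord_sup hθ] at hγ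
    rcases (seq n).2.2 _ _ hγ with h | h
    · exact Or.inl ⟨n, γ, h⟩
    · exact Or.inr ⟨n, γ, h⟩
  · -- t4
    rintro a c ⟨n, γ, hγ⟩ hac
    exact ⟨n, γ, (seq n).2.1.2.2.1 _ hγ _ (thetaWord_mono hθ γ hac)⟩
  · -- t5
    rintro a ⟨n, γ, hγ⟩ hreg
    rcases γ with _ | ⟨α, γ'⟩
    · obtain ⟨α, hα⟩ := hstep2 (seq n) a hγ hreg
      refine ⟨α, n + 1, [], ?_⟩
      rw [hseq_succ]
      exact hα
    · exact ⟨α, n, γ', hγ⟩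
  · -- t6
    have claim : ∀ (n m : ℕ), n ≤ m → ∀ (a a' : X) (γ γ' : List L),
        thetaWord θ γ a ∈ (seq n).1 → thetaWord θ γ' a' ∈ (seq m).1 →
        ∃ β δ : List L, thetaWord θ β a ⊓ thetaWord θ δ a' ∈ T := by
      intro n m hnm a a' γ γ' hγ hγ'
      obtain ⟨δ, hδ⟩ := hchain n m hnm _ hγ
      rw [← thetaWord_append] at hδ
      exact ⟨γ ++ δ, γ', m, [], by
        rw [thetaWord_nil]
        exact (seq m).2.1.2.1 _ hδ _ hγ'⟩
    rintro a a' ⟨n, γ, hγ⟩ ⟨m, γ', hγ'⟩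
    rcases le_total n m with h | h
    · exact claim n m h a a' γ γ' hγ hγ'
    · obtain ⟨β, δ, hmem⟩ := claim m n h a' a γ' γ hγ' hγ
      exact ⟨δ, β, by rwa [inf_comm]⟩

end Filters

end Statement14Aux


/-- **Statement 14.** If either `B = {∅}` or `B ∖ {∅}` is the only maximal tail, then
`S(H(A)) = B` for every nonempty `A ∈ B`. -/
theorem SHA_eq_univ_of_unique_maximalTail
    {X L : Type*} [GeneralizedBooleanAlgebra X] (θ : L → X → X)
    (hθ : ∀ α : L, IsBoolAction (θ α))
    (h : (∀ a : X, a = ⊥) ∨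
      (MaximalTail θ {a : X | a ≠ ⊥} ∧
        ∀ T : Set X, MaximalTail θ T → T = {a : X | a ≠ ⊥})) :
    ∀ A : X, A ≠ ⊥ → SHA θ A = Set.univ := by
  intro A hA
  rcases h with htriv | ⟨-, huniq⟩
  · exact absurd (htriv A) hA
  · rw [Set.eq_univ_iff_forall]
    by_contra hcon
    push_neg at hcon
    obtain ⟨b, hb⟩ := hcon
    obtain ⟨T, hT, hTdisj⟩ := Statement14Aux.exists_maximalTail hθ
      (fun a ha c hca => Statement14Aux.SHA_lower hθ ha hca)
      (fun a ha c hc => Statement14Aux.SHA_sup hθ ha hc)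
      (Statement14Aux.bot_mem_SHA hθ)
      (fun a ha γ => Statement14Aux.SHA_thetaWord hθ γ ha)
      (Statement14Aux.SHA_saturated hθ)
      hb
    have hAT : A ∈ T := by
      rw [huniq T hT]
      exact hA
    exact hTdisj A hAT (Statement14Aux.self_mem_SHA hθ)
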